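/- If ν(B̄(x, r)) ≤ β for every x ∈ ℝ^D and μ(B̄(y, r)) ≤ β for every y ∈ ℝ^D, where B̄(x, r) is the closed Euclidean ball of radius r centered at x, then the variance of the cross-edge count satisfies Var(Z) ≤ 4β·n₁·n₂ + 2β²·n₁·n₂·(n₁ + n₂). -/

import Mathlib

open MeasureTheory ProbabilityTheory

lemma crossAux {D : ℕ} {α : Type*} [MeasurableSpace α] (ρ : Measure α)
    (κ : Measure (EuclideanSpace ℝ (Fin D))) [SFinite κ]
    {s : Set α} (hs : MeasurableSet s) {c : α → EuclideanSpace ℝ (Fin D)} (hc : Measurable c)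
    {r β : ℝ} (hκ : ∀ x, κ (Metric.closedBall x r) ≤ ENNReal.ofReal β)
    (hρ : ρ s ≤ ENNReal.ofReal β) :
    (ρ.prod κ) {p : α × EuclideanSpace ℝ (Fin D) | p.1 ∈ s ∧ p.2 ∈ Metric.closedBall (c p.1) r}
      ≤ ENNReal.ofReal β * ENNReal.ofReal β := by
  have hmeas : MeasurableSet
      {p : α × EuclideanSpace ℝ (Fin D) | p.1 ∈ s ∧ p.2 ∈ Metric.closedBall (c p.1) r} := by
    have h2 : Measurable fun p : α × EuclideanSpace ℝ (Fin D) => dist p.2 (c p.1) :=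
      measurable_snd.dist (hc.comp measurable_fst)
    exact (hs.preimage measurable_fst).inter (measurableSet_le h2 measurable_const)
  rw [Measure.prod_apply hmeas]
  calc ∫⁻ a, κ (Prod.mk a ⁻¹'
        {p : α × EuclideanSpace ℝ (Fin D) | p.1 ∈ s ∧ p.2 ∈ Metric.closedBall (c p.1) r}) ∂ρ
      ≤ ∫⁻ a, s.indicator (fun _ => ENNReal.ofReal β) a ∂ρ := by
        refine lintegral_mono fun a => ?_
        by_cases ha : a ∈ s
        · have hsub : Prod.mk a ⁻¹'
              {p : α × EuclideanSpace ℝ (Fin D) | p.1 ∈ s ∧ p.2 ∈ Metric.closedBall (c p.1) r}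
              ⊆ Metric.closedBall (c a) r := fun y hy => hy.2
          simpa [Set.indicator_of_mem ha] using (measure_mono hsub).trans (hκ (c a))
        · have hemp : Prod.mk a ⁻¹'
              {p : α × EuclideanSpace ℝ (Fin D) | p.1 ∈ s ∧ p.2 ∈ Metric.closedBall (c p.1) r}
              = ∅ := by
            ext y; simp [ha]
          simp [hemp, ha]
    _ = ENNReal.ofReal β * ρ s := lintegral_indicator_const hs _
    _ ≤ ENNReal.ofReal β * ENNReal.ofReal β := mul_le_mul_right hρ _

theorem cross_edge_variance_bound
    {Ω' : Type*} [MeasurableSpace Ω'] (P : Measure Ω') [IsProbabilityMeasure P]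
    (n₁ n₂ D : ℕ) (hn₁ : 1 ≤ n₁) (hn₂ : 1 ≤ n₂) (hD : 1 ≤ D)
    (r β : ℝ) (hr : 0 < r) (hβ : 0 ≤ β)
    (μ ν : Measure (EuclideanSpace ℝ (Fin D)))
    (X : Fin n₁ → Ω' → EuclideanSpace ℝ (Fin D))
    (Y : Fin n₂ → Ω' → EuclideanSpace ℝ (Fin D))
    (hXmeas : ∀ i, Measurable (X i)) (hYmeas : ∀ j, Measurable (Y j))
    (hindep : iIndepFun (Sum.elim X Y) P)
    (hX : ∀ i, Measure.map (X i) P = μ)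
    (hY : ∀ j, Measure.map (Y j) P = ν)
    (Z : Ω' → ℝ)
    (hZ : ∀ ω, Z ω = ∑ i, ∑ j, if ‖X i ω - Y j ω‖ ≤ r then (1:ℝ) else 0)
    (hν : ∀ x : EuclideanSpace ℝ (Fin D),
      ν (Metric.closedBall x r) ≤ ENNReal.ofReal β)
    (hμ : ∀ y : EuclideanSpace ℝ (Fin D),
      μ (Metric.closedBall y r) ≤ ENNReal.ofReal β) :
    variance Z P ≤ 4 * β * n₁ * n₂ + 2 * β^2 * n₁ * n₂ * (n₁ + n₂) := by
  classical
  -- probability measure instances on μ and ν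
  have hμP : IsProbabilityMeasure μ := by
    rw [← hX ⟨0, hn₁⟩]; exact Measure.isProbabilityMeasure_map (hXmeas _).aemeasurable
  have hνP : IsProbabilityMeasure ν := by
    rw [← hY ⟨0, hn₂⟩]; exact Measure.isProbabilityMeasure_map (hYmeas _).aemeasurable
  -- basic objects
  let A : Fin n₁ × Fin n₂ → Set Ω' := fun p => {ω | ‖X p.1 ω - Y p.2 ω‖ ≤ r}
  have hA : ∀ p, MeasurableSet (A p) := fun p =>
    measurableSet_le (((hXmeas p.1).sub (hYmeas p.2)).norm) measurable_const
  let ξ : Fin n₁ × Fin n₂ → Ω' → ℝ := fun p => (A p).indicator 1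
  have hZω : ∀ ω, Z ω = ∑ p : Fin n₁ × Fin n₂, ξ p ω := by
    intro ω
    rw [hZ, Fintype.sum_prod_type]
    refine Finset.sum_congr rfl fun i _ => Finset.sum_congr rfl fun j _ => ?_
    simp [ξ, A, Set.indicator_apply]
  have hfmeas : ∀ u, Measurable (Sum.elim X Y u) := by
    rintro (i | j); exacts [hXmeas i, hYmeas j]
  -- the cross set
  let sE : Set (EuclideanSpace ℝ (Fin D) × EuclideanSpace ℝ (Fin D)) := {q | ‖q.1 - q.2‖ ≤ r}
  have hsE : MeasurableSet sE :=
    measurableSet_le ((measurable_fst.sub measurable_snd).norm) measurable_const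
  have hVmeas : ∀ (i : Fin n₁) (j : Fin n₂),
      Measurable (fun ω => (X i ω, Y j ω)) := fun i j => (hXmeas i).prodMk (hYmeas j)
  have hVlaw : ∀ (i : Fin n₁) (j : Fin n₂),
      Measure.map (fun ω => (X i ω, Y j ω)) P = μ.prod ν := by
    intro i j
    have h := hindep.indepFun
      (show (Sum.inl i : Fin n₁ ⊕ Fin n₂) ≠ Sum.inr j by simp)
    simp only [Sum.elim_inl, Sum.elim_inr] at h
    rw [(indepFun_iff_map_prod_eq_prod_map_map (hXmeas i).aemeasurable
      (hYmeas j).aemeasurable).mp h, hX, hY]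
  have hAeq : ∀ p : Fin n₁ × Fin n₂, A p = (fun ω => (X p.1 ω, Y p.2 ω)) ⁻¹' sE := fun p => rfl
  -- bound on the probability of a single cross event
  have hPs : (μ.prod ν) sE ≤ ENNReal.ofReal β := by
    rw [Measure.prod_apply hsE]
    have hptw : ∀ x : EuclideanSpace ℝ (Fin D), ν (Prod.mk x ⁻¹' sE) ≤ ENNReal.ofReal β := by
      intro x
      have hball : Prod.mk x ⁻¹' sE = Metric.closedBall x r := by
        ext y
        simp only [sE, Set.mem_preimage, Set.mem_setOf_eq, Metric.mem_closedBall,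
          dist_eq_norm]
        rw [norm_sub_rev]
      rw [hball]; exact hν x
    calc ∫⁻ x, ν (Prod.mk x ⁻¹' sE) ∂μ ≤ ∫⁻ _, ENNReal.ofReal β ∂μ := lintegral_mono hptw
      _ = ENNReal.ofReal β := by simp
  have hPA : ∀ p, P (A p) ≤ ENNReal.ofReal β := by
    intro p
    rw [hAeq p, ← Measure.map_apply (hVmeas p.1 p.2) hsE, hVlaw]
    exact hPs
  -- case i = k, j ≠ l
  have hBcase : ∀ (i : Fin n₁) (j l : Fin n₂), j ≠ l →
      P (A (i, j) ∩ A (i, l)) ≤ ENNReal.ofReal β * ENNReal.ofReal β := by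
    intro i j l hjl
    set W : Ω' → (EuclideanSpace ℝ (Fin D) × EuclideanSpace ℝ (Fin D)) × EuclideanSpace ℝ (Fin D) := fun ω => ((X i ω, Y j ω), Y l ω) with hW
    have hWm : Measurable W := (hVmeas i j).prodMk (hYmeas l)
    have hWlaw : Measure.map W P = (μ.prod ν).prod ν := by
      have h := hindep.indepFun_prodMk hfmeas (Sum.inl i) (Sum.inr j) (Sum.inr l)
        (by simp) (by simpa using hjl)
      simp only [Sum.elim_inl, Sum.elim_inr] at h
      rw [(indepFun_iff_map_prod_eq_prod_map_map (hVmeas i j).aemeasurable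
        (hYmeas l).aemeasurable).mp h, hVlaw i j, hY l]
    have hm2 : MeasurableSet {p : (EuclideanSpace ℝ (Fin D) × EuclideanSpace ℝ (Fin D)) × EuclideanSpace ℝ (Fin D) | p.1 ∈ sE ∧ p.2 ∈ Metric.closedBall p.1.1 r} :=
      (hsE.preimage measurable_fst).inter
        (measurableSet_le (measurable_snd.dist measurable_fst.fst) measurable_const)
    have hset : A (i, j) ∩ A (i, l)
        = W ⁻¹' {p : (EuclideanSpace ℝ (Fin D) × EuclideanSpace ℝ (Fin D)) × EuclideanSpace ℝ (Fin D) | p.1 ∈ sE ∧ p.2 ∈ Metric.closedBall p.1.1 r} := by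
      ext ω
      simp only [A, sE, W, Set.mem_inter_iff, Set.mem_setOf_eq, Set.mem_preimage,
        Metric.mem_closedBall, dist_eq_norm]
      constructor
      · rintro ⟨h1, h2⟩; exact ⟨h1, by rwa [norm_sub_rev]⟩
      · rintro ⟨h1, h2⟩; exact ⟨h1, by rwa [norm_sub_rev] at h2⟩
    rw [hset, ← Measure.map_apply hWm hm2, hWlaw]
    exact crossAux (μ.prod ν) ν hsE measurable_fst hν hPs
  -- case i ≠ k, j = l
  have hCcase : ∀ (i k : Fin n₁) (j : Fin n₂), i ≠ k →
      P (A (i, j) ∩ A (k, j)) ≤ ENNReal.ofReal β * ENNReal.ofReal β := by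
    intro i k j hik
    set W : Ω' → (EuclideanSpace ℝ (Fin D) × EuclideanSpace ℝ (Fin D)) × EuclideanSpace ℝ (Fin D) := fun ω => ((X i ω, Y j ω), X k ω) with hW
    have hWm : Measurable W := (hVmeas i j).prodMk (hXmeas k)
    have hWlaw : Measure.map W P = (μ.prod ν).prod μ := by
      have h := hindep.indepFun_prodMk hfmeas (Sum.inl i) (Sum.inr j) (Sum.inl k)
        (by simpa using hik) (by simp)
      simp only [Sum.elim_inl, Sum.elim_inr] at h
      rw [(indepFun_iff_map_prod_eq_prod_map_map (hVmeas i j).aemeasurable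
        (hXmeas k).aemeasurable).mp h, hVlaw i j, hX k]
    have hm2 : MeasurableSet {p : (EuclideanSpace ℝ (Fin D) × EuclideanSpace ℝ (Fin D)) × EuclideanSpace ℝ (Fin D) | p.1 ∈ sE ∧ p.2 ∈ Metric.closedBall p.1.2 r} :=
      (hsE.preimage measurable_fst).inter
        (measurableSet_le (measurable_snd.dist measurable_fst.snd) measurable_const)
    have hset : A (i, j) ∩ A (k, j)
        = W ⁻¹' {p : (EuclideanSpace ℝ (Fin D) × EuclideanSpace ℝ (Fin D)) × EuclideanSpace ℝ (Fin D) | p.1 ∈ sE ∧ p.2 ∈ Metric.closedBall p.1.2 r} := by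
      ext ω
      simp only [A, sE, W, Set.mem_inter_iff, Set.mem_setOf_eq, Set.mem_preimage,
        Metric.mem_closedBall, dist_eq_norm]
    rw [hset, ← Measure.map_apply hWm hm2, hWlaw]
    exact crossAux (μ.prod ν) μ hsE measurable_snd hμ hPs
  -- independent case
  have hD2 : ∀ p q : Fin n₁ × Fin n₂, p.1 ≠ q.1 → p.2 ≠ q.2 →
      P (A p ∩ A q) = P (A p) * P (A q) := by
    intro p q h1 h2
    have h := hindep.indepFun_prodMk_prodMk hfmeas
      (Sum.inl p.1) (Sum.inr p.2) (Sum.inl q.1) (Sum.inr q.2)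
      (by simpa using h1) (by simp) (by simp) (by simpa using h2)
    simp only [Sum.elim_inl, Sum.elim_inr] at h
    have := h.measure_inter_preimage_eq_mul sE sE hsE hsE
    rw [hAeq p, hAeq q]
    exact this
  -- integrability facts
  have hξprodeq : ∀ p q : Fin n₁ × Fin n₂,
      (fun ω => ξ p ω * ξ q ω) = (A p ∩ A q).indicator (1 : Ω' → ℝ) := by
    intro p q
    funext ω
    rw [Set.inter_indicator_one]
    rfl
  have hξint : ∀ p q : Fin n₁ × Fin n₂, Integrable (fun ω => ξ p ω * ξ q ω) P := by
    intro p q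
    rw [hξprodeq p q]
    exact (integrable_const (1 : ℝ)).indicator ((hA p).inter (hA q))
  have hξint1 : ∀ p : Fin n₁ × Fin n₂, Integrable (ξ p) P := fun p =>
    (integrable_const (1 : ℝ)).indicator (hA p)
  have hprod : ∀ p q : Fin n₁ × Fin n₂,
      ∫ ω, ξ p ω * ξ q ω ∂P = (P (A p ∩ A q)).toReal := by
    intro p q
    rw [hξprodeq p q]
    exact integral_indicator_one ((hA p).inter (hA q))
  have hval : ∀ p : Fin n₁ × Fin n₂, ∫ ω, ξ p ω ∂P = (P (A p)).toReal := fun p =>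
    integral_indicator_one (hA p)
  -- Z is in L²
  have hMem : MemLp Z 2 P := by
    have hξmem : ∀ p : Fin n₁ × Fin n₂, MemLp (ξ p) 2 P := fun p =>
      MemLp.of_bound ((measurable_one.indicator (hA p)).aestronglyMeasurable) 1
        (Filter.Eventually.of_forall fun ω => by
          simp only [ξ, Set.indicator_apply]
          split <;> simp)
    have h2 := memLp_finset_sum' (μ := P) (p := 2) Finset.univ fun p _ => hξmem p
    have hZeq : Z = ∑ p : Fin n₁ × Fin n₂, ξ p := by
      funext ω; rw [hZω ω, Finset.sum_apply]
    rw [hZeq]; exact h2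
  -- variance expansion
  have hVar : variance Z P = ∑ p : Fin n₁ × Fin n₂, ∑ q : Fin n₁ × Fin n₂,
      ((P (A p ∩ A q)).toReal - (P (A p)).toReal * (P (A q)).toReal) := by
    rw [variance_eq_sub hMem]
    have h1 : ∫ ω, (Z ^ 2) ω ∂P = ∑ p : Fin n₁ × Fin n₂, ∑ q : Fin n₁ × Fin n₂,
        (P (A p ∩ A q)).toReal := by
      calc ∫ ω, (Z ^ 2) ω ∂P
          = ∫ ω, ∑ p : Fin n₁ × Fin n₂, ∑ q : Fin n₁ × Fin n₂, ξ p ω * ξ q ω ∂P := by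
            refine integral_congr_ae (Filter.Eventually.of_forall fun ω => ?_)
            simp only [Pi.pow_apply]
            rw [hZω ω, pow_two, Finset.sum_mul_sum]
        _ = ∑ p : Fin n₁ × Fin n₂, ∫ ω, ∑ q : Fin n₁ × Fin n₂, ξ p ω * ξ q ω ∂P := by
            exact integral_finset_sum _ fun p _ => integrable_finset_sum _ fun q _ => hξint p q
        _ = ∑ p : Fin n₁ × Fin n₂, ∑ q : Fin n₁ × Fin n₂, ∫ ω, ξ p ω * ξ q ω ∂P :=
            Finset.sum_congr rfl fun p _ => integral_finset_sum _ fun q _ => hξint p q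
        _ = ∑ p : Fin n₁ × Fin n₂, ∑ q : Fin n₁ × Fin n₂, (P (A p ∩ A q)).toReal :=
            Finset.sum_congr rfl fun p _ => Finset.sum_congr rfl fun q _ => hprod p q
    have h2 : ∫ ω, Z ω ∂P = ∑ p : Fin n₁ × Fin n₂, (P (A p)).toReal := by
      calc ∫ ω, Z ω ∂P = ∫ ω, ∑ p : Fin n₁ × Fin n₂, ξ p ω ∂P :=
            integral_congr_ae (Filter.Eventually.of_forall fun ω => hZω ω)
        _ = ∑ p : Fin n₁ × Fin n₂, ∫ ω, ξ p ω ∂P := integral_finset_sum _ fun p _ => hξint1 p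
        _ = ∑ p : Fin n₁ × Fin n₂, (P (A p)).toReal :=
            Finset.sum_congr rfl fun p _ => hval p
    show ∫ ω, (Z ^ 2) ω ∂P - (∫ ω, Z ω ∂P) ^ 2 = _
    rw [h1, h2, pow_two, Finset.sum_mul_sum, ← Finset.sum_sub_distrib]
    exact Finset.sum_congr rfl fun p _ => by rw [← Finset.sum_sub_distrib]
  -- pointwise bound on covariance terms
  have key : ∀ p q : Fin n₁ × Fin n₂,
      (P (A p ∩ A q)).toReal - (P (A p)).toReal * (P (A q)).toReal
        ≤ (if p = q then β else 0) + (if p.1 = q.1 then β ^ 2 else 0)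
          + (if p.2 = q.2 then β ^ 2 else 0) := by
    rintro ⟨i, j⟩ ⟨k, l⟩
    have hnn : 0 ≤ (P (A (i, j))).toReal * (P (A (k, l))).toReal :=
      mul_nonneg ENNReal.toReal_nonneg ENNReal.toReal_nonneg
    have hb2 : 0 ≤ β ^ 2 := sq_nonneg β
    have hmulβ : (ENNReal.ofReal β * ENNReal.ofReal β) = ENNReal.ofReal (β ^ 2) := by
      rw [← ENNReal.ofReal_mul hβ, pow_two]
    by_cases hik : i = k
    · by_cases hjl : j = l
      · subst hik; subst hjl
        have h1 : (P (A (i, j) ∩ A (i, j))).toReal ≤ β := by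
          rw [Set.inter_self]
          exact ENNReal.toReal_le_of_le_ofReal hβ (hPA (i, j))
        simp only [Set.inter_self] at h1
        simp
        linarith
      · have h1 : (P (A (i, j) ∩ A (k, l))).toReal ≤ β ^ 2 := by
          refine ENNReal.toReal_le_of_le_ofReal hb2 ?_
          rw [← hmulβ]
          subst hik
          exact hBcase i j l hjl
        subst hik
        simp [hjl]
        linarith
    · by_cases hjl : j = l
      · have h1 : (P (A (i, j) ∩ A (k, l))).toReal ≤ β ^ 2 := by
          refine ENNReal.toReal_le_of_le_ofReal hb2 ?_
          rw [← hmulβ]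
          subst hjl
          exact hCcase i k j hik
        subst hjl
        simp [hik]
        linarith
      · have h1 : P (A (i, j) ∩ A (k, l)) = P (A (i, j)) * P (A (k, l)) :=
          hD2 (i, j) (k, l) hik hjl
        rw [h1, ENNReal.toReal_mul]
        simp [hik, hjl]
  -- summing the bound
  have hsum : ∀ p : Fin n₁ × Fin n₂,
      (∑ q : Fin n₁ × Fin n₂, ((if p = q then β else 0) + (if p.1 = q.1 then β ^ 2 else 0)
        + (if p.2 = q.2 then β ^ 2 else 0)))
      = β + (n₂ : ℝ) * β ^ 2 + (n₁ : ℝ) * β ^ 2 := by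
    intro p
    rw [Finset.sum_add_distrib, Finset.sum_add_distrib]
    have e1 : (∑ q : Fin n₁ × Fin n₂, if p = q then β else 0) = β := by
      rw [Finset.sum_ite_eq]; simp
    have e2 : (∑ q : Fin n₁ × Fin n₂, if p.1 = q.1 then β ^ 2 else 0) = (n₂ : ℝ) * β ^ 2 := by
      rw [Fintype.sum_prod_type]
      have : ∀ k : Fin n₁, (∑ _l : Fin n₂, if p.1 = k then β ^ 2 else 0)
          = (if p.1 = k then (n₂ : ℝ) * β ^ 2 else 0) := by
        intro k
        by_cases h : p.1 = k <;>
          simp [h, Finset.sum_const, Finset.card_univ, nsmul_eq_mul]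
      rw [Finset.sum_congr rfl fun k _ => this k, Finset.sum_ite_eq]
      simp
    have e3 : (∑ q : Fin n₁ × Fin n₂, if p.2 = q.2 then β ^ 2 else 0) = (n₁ : ℝ) * β ^ 2 := by
      rw [Fintype.sum_prod_type]
      have : ∀ k : Fin n₁, (∑ l : Fin n₂, if p.2 = l then β ^ 2 else 0) = β ^ 2 := by
        intro k
        rw [Finset.sum_ite_eq]; simp
      rw [Finset.sum_congr rfl fun k _ => this k, Finset.sum_const, Finset.card_univ]
      simp [nsmul_eq_mul]
    rw [e1, e2, e3]
  have hn₁' : (1 : ℝ) ≤ (n₁ : ℝ) := by exact_mod_cast hn₁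
  have hn₂' : (1 : ℝ) ≤ (n₂ : ℝ) := by exact_mod_cast hn₂
  calc variance Z P
      = ∑ p : Fin n₁ × Fin n₂, ∑ q : Fin n₁ × Fin n₂,
        ((P (A p ∩ A q)).toReal - (P (A p)).toReal * (P (A q)).toReal) := hVar
    _ ≤ ∑ p : Fin n₁ × Fin n₂, ∑ q : Fin n₁ × Fin n₂,
        ((if p = q then β else 0) + (if p.1 = q.1 then β ^ 2 else 0)
          + (if p.2 = q.2 then β ^ 2 else 0)) :=
        Finset.sum_le_sum fun p _ => Finset.sum_le_sum fun q _ => key p q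
    _ = ∑ _p : Fin n₁ × Fin n₂, (β + (n₂ : ℝ) * β ^ 2 + (n₁ : ℝ) * β ^ 2) :=
        Finset.sum_congr rfl fun p _ => hsum p
    _ = (n₁ : ℝ) * (n₂ : ℝ) * (β + (n₂ : ℝ) * β ^ 2 + (n₁ : ℝ) * β ^ 2) := by
        rw [Finset.sum_const, Finset.card_univ]
        simp only [Fintype.card_prod, Fintype.card_fin, nsmul_eq_mul]
        push_cast
        ring
    _ ≤ 4 * β * n₁ * n₂ + 2 * β ^ 2 * n₁ * n₂ * (n₁ + n₂) := by
        nlinarith [mul_nonneg (mul_nonneg hβ (le_trans zero_le_one hn₁'))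
            (le_trans zero_le_one hn₂'),
          mul_nonneg (mul_nonneg (sq_nonneg β) (le_trans zero_le_one hn₁'))
            (mul_nonneg (le_trans zero_le_one hn₂')
              (add_nonneg (le_trans zero_le_one hn₁') (le_trans zero_le_one hn₂')))]
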